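/- Let γ be a nonzero complex number. There exist a nonzero integer n, a complex number ρ with (ρ = n·γ or ρ = -n/γ), a nonnegative integer s with n·ρ = 4γ(|n|/2+s)², and a nonnegative integer r with ρ² = -(|n|+2r)², if and only if γ = i·p/q for some nonzero integers p, q. -/

import Mathlib

open Complex

lemma sq_eq_neg_sq_div_aux (γ : ℂ) (a b : ℤ) (ha : a ≠ 0) (hb : b ≠ 0)
    (h : γ ^ 2 = -((a : ℂ) / (b : ℂ)) ^ 2) :
    ∃ p q : ℤ, p ≠ 0 ∧ q ≠ 0 ∧ γ = Complex.I * (p : ℂ) / (q : ℂ) := by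
  have hI : Complex.I ^ 2 = -1 := Complex.I_sq
  have hfac : (γ - Complex.I * (a : ℂ) / (b : ℂ)) * (γ + Complex.I * (a : ℂ) / (b : ℂ)) = 0 := by
    linear_combination h - ((a:ℂ)/(b:ℂ))^2 * hI
  rcases mul_eq_zero.1 hfac with h' | h'
  · exact ⟨a, b, ha, hb, by linear_combination h'⟩
  · refine ⟨-a, b, neg_ne_zero.2 ha, hb, ?_⟩
    push_cast
    linear_combination h'

theorem main_theorem (γ : ℂ) (hγ : γ ≠ 0) :
    (∃ n : ℤ, n ≠ 0 ∧ ∃ ρ : ℂ,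
      (ρ = (n : ℂ) * γ ∨ ρ = -(n : ℂ) / γ) ∧
      (∃ s : ℕ, (n : ℂ) * ρ = 4 * γ * (((|n| : ℤ) : ℂ) / 2 + (s : ℂ)) ^ 2) ∧
      (∃ r : ℕ, ρ ^ 2 = -(((|n| : ℤ) : ℂ) + 2 * (r : ℂ)) ^ 2)) ↔
    ∃ p q : ℤ, p ≠ 0 ∧ q ≠ 0 ∧ γ = Complex.I * (p : ℂ) / (q : ℂ) := by
  constructor
  · rintro ⟨n, hn, ρ, hρ, ⟨s, hs⟩, ⟨r, hr⟩⟩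
    have hnC : (n : ℂ) ≠ 0 := Int.cast_ne_zero.2 hn
    have hnabs : 0 < |n| := abs_pos.2 hn
    rcases hρ with rfl | rfl
    · -- ρ = n γ : use Naimark constraint
      apply sq_eq_neg_sq_div_aux γ (|n| + 2 * (r : ℤ)) n (by omega) hn
      push_cast
      field_simp
      linear_combination hr
    · -- ρ = -n/γ : use diagonal constraint
      have hbZ : |n| + 2 * (s : ℤ) ≠ 0 := by omega
      apply sq_eq_neg_sq_div_aux γ n (|n| + 2 * (s : ℤ)) hn hbZ
      have hbC : ((|n| : ℤ) : ℂ) + 2 * (s : ℂ) ≠ 0 := by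
        have h0 : (((|n| + 2 * (s : ℤ) : ℤ)) : ℂ) ≠ 0 := Int.cast_ne_zero.2 hbZ
        push_cast at h0
        exact h0
      have h4 := hs
      field_simp at h4
      have hs' : -(n : ℂ) ^ 2 = γ ^ 2 * (((|n| : ℤ) : ℂ) + 2 * (s : ℂ)) ^ 2 := by
        linear_combination h4 / 4
      push_cast
      field_simp [hbC]
      linear_combination -hs'
  · rintro ⟨p, q, hp, hq, rfl⟩
    have hpC : (p : ℂ) ≠ 0 := Int.cast_ne_zero.2 hp
    have hqC : (q : ℂ) ≠ 0 := Int.cast_ne_zero.2 hq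
    have hI : Complex.I ^ 2 = -1 := Complex.I_sq
    have hP2 : ((|p| : ℤ) : ℂ) ^ 2 = (p : ℂ) ^ 2 := by
      exact_mod_cast congrArg (Int.cast : ℤ → ℂ) (sq_abs p)
    have hQ2 : ((|q| : ℤ) : ℂ) ^ 2 = (q : ℂ) ^ 2 := by
      exact_mod_cast congrArg (Int.cast : ℤ → ℂ) (sq_abs q)
    rcases le_or_gt |q| |p| with hle | hlt
    · refine ⟨2 * |q|, by positivity,
        ((2 * |q| : ℤ) : ℂ) * (Complex.I * (p : ℂ) / (q : ℂ)),
        Or.inl (by push_cast; ring), ⟨0, ?_⟩, ⟨(|p| - |q|).toNat, ?_⟩⟩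
      · rw [show |(2 * |q|)| = 2 * |q| from abs_of_nonneg (by positivity)]
        push_cast
        ring
      · rw [show |(2 * |q|)| = 2 * |q| from abs_of_nonneg (by positivity)]
        have hcast : (((|p| - |q|).toNat : ℤ) : ℂ) = ((|p| : ℤ) : ℂ) - ((|q| : ℤ) : ℂ) := by
          rw [Int.toNat_of_nonneg (by omega)]; push_cast; ring
        push_cast at hcast ⊢
        rw [hcast]
        field_simp
        linear_combination (p : ℂ) ^ 2 * ((|q| : ℤ) : ℂ) ^ 2 * hI +
          (q : ℂ) ^ 2 * hP2 - (p : ℂ) ^ 2 * hQ2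
    · refine ⟨2 * |p|, by positivity,
        -((2 * |p| : ℤ) : ℂ) / (Complex.I * (p : ℂ) / (q : ℂ)),
        Or.inr (by push_cast; ring), ⟨(|q| - |p|).toNat, ?_⟩, ⟨(|q| - |p|).toNat, ?_⟩⟩ <;>
      · rw [show |(2 * |p|)| = 2 * |p| from abs_of_nonneg (by positivity)]
        have hcast : (((|q| - |p|).toNat : ℤ) : ℂ) = ((|q| : ℤ) : ℂ) - ((|p| : ℤ) : ℂ) := by
          rw [Int.toNat_of_nonneg (by omega)]; push_cast; ring
        push_cast at hcast ⊢
        rw [hcast]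
        field_simp
        first
        | linear_combination -4 * (p : ℂ) ^ 2 * ((|q| : ℤ) : ℂ) ^ 2 * hI -
            4 * (q : ℂ) ^ 2 * hP2 + 4 * (p : ℂ) ^ 2 * hQ2
        | linear_combination (p : ℂ) ^ 2 * ((|q| : ℤ) : ℂ) ^ 2 * hI +
            (q : ℂ) ^ 2 * hP2 - (p : ℂ) ^ 2 * hQ2
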